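/- Let G1 be a connected graph and T a tree. If the maximum degree Δ(T) > |V(G1)|, then the Cartesian product G1 □ T is not 1-tough. -/

import Mathlib

open SimpleGraph

/-- A spanning subgraph each of whose components is a path of order at least 2. -/
def SimpleGraph.Subgraph.IsPathFactor {V : Type*} {G : SimpleGraph V} (F : G.Subgraph) : Prop :=
  F.verts = Set.univ ∧
    ∀ c : F.coe.ConnectedComponent,
      ∃ k : ℕ, 2 ≤ k ∧ Nonempty (F.coe.induce c.supp ≃g pathGraph k)

/-- `G` has a path factor. -/
def SimpleGraph.HasPathFactor {V : Type*} (G : SimpleGraph V) : Prop :=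
  ∃ F : G.Subgraph, F.IsPathFactor

/-- A spanning subgraph each of whose components is isomorphic to `P₂` or `P₃`. -/
def SimpleGraph.Subgraph.IsP2P3Factor {V : Type*} {G : SimpleGraph V} (F : G.Subgraph) : Prop :=
  F.verts = Set.univ ∧
    ∀ c : F.coe.ConnectedComponent,
      ∃ k : ℕ, (k = 2 ∨ k = 3) ∧ Nonempty (F.coe.induce c.supp ≃g pathGraph k)

/-- The number of isolated vertices of `G − S`. -/
noncomputable def SimpleGraph.numIsolatedOutside {V : Type*} (G : SimpleGraph V) (S : Set V) : ℕ :=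
  Nat.card {v : V | v ∉ S ∧ ∀ w, G.Adj v w → w ∈ S}

/-- The number of connected components of `G − S`. -/
noncomputable def SimpleGraph.numComponentsOutside {V : Type*} (G : SimpleGraph V) (S : Set V) : ℕ :=
  Nat.card (G.induce Sᶜ).ConnectedComponent

/-- `G` is 1-tough: any cut set `S` satisfies `|S| ≥ c(G − S)`. -/
def SimpleGraph.IsOneTough {V : Type*} [Fintype V] (G : SimpleGraph V) : Prop :=
  ∀ S : Finset V, 2 ≤ G.numComponentsOutside ↑S → G.numComponentsOutside ↑S ≤ S.card

/-- `G` is traceable: it has a Hamiltonian path. -/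
def SimpleGraph.Traceable {V : Type*} [DecidableEq V] (G : SimpleGraph V) : Prop :=
  ∃ (a b : V) (p : G.Walk a b), p.IsHamiltonian

theorem stmt6 {V₁ V₂ : Type*} [Fintype V₁] [Fintype V₂]
    (G₁ : SimpleGraph V₁) (T : SimpleGraph V₂) [DecidableRel T.Adj]
    (hG₁ : G₁.Connected) (hT : T.IsTree)
    (h : Fintype.card V₁ < T.maxDegree) :
    ¬ (G₁ □ T).IsOneTough := by
  classical
  intro hTough
  unfold SimpleGraph.IsOneTough SimpleGraph.numComponentsOutside at hTough
  have hV₂ : Nonempty V₂ := hT.isConnected.nonempty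
  obtain ⟨t, ht⟩ := T.exists_maximal_degree_vertex
  have hV₁ : Nonempty V₁ := hG₁.nonempty
  obtain ⟨v₀⟩ := hV₁
  set S : Finset (V₁ × V₂) := Finset.univ.image (fun v : V₁ => (v, t)) with hS
  have hmem : ∀ x : V₁ × V₂, x ∈ ((↑S : Set (V₁ × V₂))ᶜ) ↔ x.2 ≠ t := by
    intro x; simp [hS, Prod.ext_iff, eq_comm]
  -- the projection
  set π : ((↑S : Set (V₁ × V₂))ᶜ : Set _) → ({t}ᶜ : Set V₂) :=
    fun x => ⟨x.1.2, (hmem x.1).mp x.2⟩ with hπ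
  -- reachability projects
  have projReach : ∀ x y : ((↑S : Set (V₁ × V₂))ᶜ : Set _),
      ((G₁ □ T).induce (↑S : Set (V₁×V₂))ᶜ).Reachable x y →
      (T.induce ({t}ᶜ : Set V₂)).Reachable (π x) (π y) := by
    intro x y hxy
    obtain ⟨p⟩ := hxy
    induction p with
    | nil => exact Reachable.refl _
    | @cons u v w huv p ih =>
      have huv' : (G₁ □ T).Adj u.1 v.1 := huv
      rw [boxProd_adj] at huv'
      rcases huv' with ⟨_, h2⟩ | ⟨h2, _⟩
      · have : π u = π v := Subtype.ext h2
        rw [this]; exact ih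
      · have hadj : (T.induce ({t}ᶜ : Set V₂)).Adj (π u) (π v) := h2
        exact hadj.reachable.trans ih
  -- tree separation
  have sep : ∀ (w w' : V₂) (hw : T.Adj t w) (hw' : T.Adj t w'), w ≠ w' →
      ¬ (T.induce ({t}ᶜ : Set V₂)).Reachable ⟨w, hw.ne'⟩ ⟨w', hw'.ne'⟩ := by
    intro w w' hw hw' hne hr
    obtain ⟨p⟩ := hr
    set q : T.Walk w w' := p.map (SimpleGraph.Embedding.induce ({t}ᶜ : Set V₂)).toHom with hq
    have htq : t ∉ q.support := by
      intro hh
      have e := Walk.support_map (SimpleGraph.Embedding.induce ({t}ᶜ : Set V₂)).toHom p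
      obtain ⟨a, -, ha⟩ := List.mem_map.mp (cast (congrArg (t ∈ ·) e) hh)
      exact a.2 ha
    have htq' : t ∉ (q.toPath : T.Walk w w').support :=
      fun hh => htq (q.support_toPath_subset hh)
    have hp2 : ((Walk.cons hw.symm (Walk.cons hw' Walk.nil)) : T.Walk w w').IsPath := by
      rw [Walk.isPath_def]
      simp [hne, hw.ne', hw'.ne', Ne.symm hw.ne', Ne.symm hw'.ne']
    have := hT.IsAcyclic.path_unique q.toPath ⟨_, hp2⟩
    rw [this] at htq'
    simp at htq'
  -- the injection from neighbors to components
  set f : (T.neighborSet t) → ((G₁ □ T).induce (↑S : Set (V₁×V₂))ᶜ).ConnectedComponent :=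
    fun w => ((G₁ □ T).induce (↑S : Set (V₁×V₂))ᶜ).connectedComponentMk ⟨(v₀, ↑w), (hmem _).mpr (w.2 : T.Adj t ↑w).ne'⟩ with hf
  have hfinj : Function.Injective f := by
    intro w w' hww
    by_contra hne
    have hr := (ConnectedComponent.eq).mp hww
    have := projReach _ _ hr
    exact sep w w' w.2 w'.2 (fun e => hne (Subtype.ext e)) this
  have hcard : T.degree t ≤ Nat.card ((G₁ □ T).induce (↑S : Set (V₁×V₂))ᶜ).ConnectedComponent := by
    have := Nat.card_le_card_of_injective f hfinj
    rwa [Nat.card_eq_fintype_card (α := T.neighborSet t), card_neighborSet_eq_degree] at this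
  have hScard : S.card = Fintype.card V₁ := by
    rw [hS, Finset.card_image_of_injective _ (fun a b hab => (Prod.ext_iff.mp hab).1)]
    simp
  have hdeg : Fintype.card V₁ < T.degree t := ht ▸ h
  have h2 : 2 ≤ Nat.card ((G₁ □ T).induce (↑S : Set (V₁×V₂))ᶜ).ConnectedComponent := by
    have : 1 ≤ Fintype.card V₁ := Fintype.card_pos_iff.mpr ⟨v₀⟩
    omega
  have := hTough S h2
  omega
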